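/- Let M_h = -S̃⁻¹S̃ᵀ where S̃ is the m×m upper-triangular matrix with 1's on the diagonal and all entries above the diagonal equal to 1. Then the eigenvalues of M_h are exactly the primitive-like roots e^{2πik/(m+1)} for k = 1,…,m, each simple; in particular M_h^{m+1} = I. -/

import Mathlib

open Matrix Polynomial

lemma my_eval_charpoly {m : ℕ} (M : Matrix (Fin m) (Fin m) ℂ) (t : ℂ) :
    (M.charpoly).eval t = (t • (1 : Matrix (Fin m) (Fin m) ℂ) - M).det := by
  rw [Matrix.charpoly, ← Polynomial.coe_evalRingHom, RingHom.map_det]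
  congr 1
  ext i j
  by_cases h : i = j <;>
    simp [h, Matrix.charmatrix_apply, Matrix.one_apply, Matrix.diagonal_apply,
      Matrix.sub_apply, Matrix.smul_apply]

theorem eigenvalues_Mh_roots_of_unity (m : ℕ)
    (S : Matrix (Fin m) (Fin m) ℂ)
    (hS : S = Matrix.of (fun i j : Fin m => if i ≤ j then 1 else 0)) :
    (-(S⁻¹ * Sᵀ)).charpoly =
      ∏ k ∈ Finset.Icc 1 m,
        (X - C (Complex.exp (2 * Real.pi * Complex.I * k / (m + 1)))) ∧
    (-(S⁻¹ * Sᵀ)) ^ (m + 1) = 1 := by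
  set M : Matrix (Fin m) (Fin m) ℂ := -(S⁻¹ * Sᵀ) with hM
  rcases Nat.eq_zero_or_pos m with hm | hm
  · subst hm
    constructor
    · simp [Matrix.charpoly, Matrix.det_isEmpty]
    · exact Subsingleton.elim _ _
  -- primitive root setup
  set ζ : ℂ := Complex.exp (2 * Real.pi * Complex.I / (m + 1)) with hζ
  have hprim : IsPrimitiveRoot ζ (m + 1) := by
    have := Complex.isPrimitiveRoot_exp (m + 1) (Nat.succ_ne_zero m)
    simpa [hζ] using this
  have hm1 : (m : ℂ) + 1 ≠ 0 := Nat.cast_add_one_ne_zero m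
  have hexp : ∀ k : ℕ, Complex.exp (2 * Real.pi * Complex.I * k / (m + 1)) = ζ ^ k := by
    intro k
    rw [hζ, ← Complex.exp_nat_mul]
    congr 1
    field_simp
  -- determinant of S
  have hSdet : S.det = 1 := by
    have htri : S.BlockTriangular id := by
      intro i j hij
      simp only [hS, Matrix.of_apply]
      rw [if_neg]
      exact fun h => absurd (lt_of_lt_of_le hij h) (lt_irrefl _)
    rw [Matrix.det_of_upperTriangular htri]
    simp [hS]
  have hSu : IsUnit S.det := by rw [hSdet]; exact isUnit_one
  -- each ζ^k, 1 ≤ k ≤ m, is a root of the charpoly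
  have hroot : ∀ k : ℕ, 1 ≤ k → k ≤ m → (M.charpoly).IsRoot (ζ ^ k) := by
    intro k hk1 hkm
    set lam : ℂ := ζ ^ k with hlam
    have hpow : lam ^ (m + 1) = 1 := by
      rw [hlam, ← pow_mul, mul_comm k (m+1), pow_mul, hprim.pow_eq_one, one_pow]
    have hne1 : lam ≠ 1 := hprim.pow_ne_one_of_pos_of_lt (by omega) (by omega)
    have hsum0 : ∑ j ∈ Finset.range (m + 1), lam ^ j = 0 := by
      have := geom_sum_mul lam (m + 1)
      rw [hpow, sub_self] at this
      rcases mul_eq_zero.mp this with h | h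
      · exact h
      · exact absurd (sub_eq_zero.mp h) hne1
    set v : Fin m → ℂ := fun j => lam ^ (j : ℕ) with hv
    have hv0 : v ≠ 0 := by
      intro h
      have := congrFun h ⟨0, hm⟩
      simp [hv] at this
    -- the key vector identity
    have hkey : Sᵀ.mulVec v = S.mulVec ((-lam) • v) := by
      funext i
      have hi : (i : ℕ) < m := i.isLt
      simp only [Matrix.mulVec, dotProduct, hS, Matrix.transpose_apply,
        Matrix.of_apply, Pi.smul_apply, smul_eq_mul, hv, ite_mul, one_mul, zero_mul]
      simp only [Fin.le_def]
      rw [Fin.sum_univ_eq_sum_range (fun j => if j ≤ (i : ℕ) then lam ^ j else 0) m,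
        Fin.sum_univ_eq_sum_range (fun j => if (i : ℕ) ≤ j then -lam * lam ^ j else 0) m]
      have e1 : ∑ j ∈ Finset.range m, (if j ≤ (i : ℕ) then lam ^ j else 0)
          = ∑ j ∈ Finset.range ((i : ℕ) + 1), lam ^ j := by
        rw [← Finset.sum_filter]
        congr 1
        ext x
        simp only [Finset.mem_filter, Finset.mem_range]
        omega
      have e2 : ∑ j ∈ Finset.range m, (if (i : ℕ) ≤ j then -lam * lam ^ j else 0)
          = ∑ j ∈ Finset.Ico (i : ℕ) m, (-lam * lam ^ j) := by
        rw [← Finset.sum_filter]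
        congr 1
        ext x
        simp only [Finset.mem_filter, Finset.mem_range, Finset.mem_Ico]
        omega
      rw [e1, e2]
      have e3 : ∑ j ∈ Finset.Ico ((i : ℕ) + 1) (m + 1), lam ^ j
          = ∑ j ∈ Finset.Ico (i : ℕ) m, (lam * lam ^ j) := by
        rw [Finset.sum_Ico_eq_sum_range, Finset.sum_Ico_eq_sum_range]
        have hmi : m + 1 - ((i : ℕ) + 1) = m - (i : ℕ) := by omega
        rw [hmi]
        refine Finset.sum_congr rfl fun j _ => ?_
        rw [← pow_succ']
        congr 1
        omega
      have e4 : ∑ j ∈ Finset.range ((i : ℕ) + 1), lam ^ j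
          + ∑ j ∈ Finset.Ico ((i : ℕ) + 1) (m + 1), lam ^ j
          = ∑ j ∈ Finset.range (m + 1), lam ^ j :=
        Finset.sum_range_add_sum_Ico _ (by omega)
      rw [hsum0] at e4
      have e5 : ∑ j ∈ Finset.Ico (i : ℕ) m, (-lam * lam ^ j)
          = -∑ j ∈ Finset.Ico ((i : ℕ) + 1) (m + 1), lam ^ j := by
        rw [e3, ← Finset.sum_neg_distrib]
        exact Finset.sum_congr rfl fun j _ => by ring
      rw [e5]
      linear_combination e4
    have hMv : M.mulVec v = lam • v := by
      have h1 : M.mulVec v = -(S⁻¹.mulVec (Sᵀ.mulVec v)) := by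
        rw [hM, Matrix.neg_mulVec, Matrix.mulVec_mulVec]
      rw [h1, hkey, Matrix.mulVec_mulVec, Matrix.nonsing_inv_mul S hSu,
        Matrix.one_mulVec]
      funext j
      simp
    rw [Polynomial.IsRoot, my_eval_charpoly]
    rw [← Matrix.exists_mulVec_eq_zero_iff]
    refine ⟨v, hv0, ?_⟩
    rw [Matrix.sub_mulVec, Matrix.smul_mulVec, Matrix.one_mulVec, hMv, sub_self]
  -- assemble: charpoly equals the product of distinct linear factors
  have hmonic : (M.charpoly).Monic := Matrix.charpoly_monic M
  have hdeg : (M.charpoly).natDegree = m := by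
    rw [Matrix.charpoly_natDegree_eq_dim]
    simp
  set s : Finset ℂ := (Finset.Icc 1 m).image (fun k => ζ ^ k) with hs
  have hinj : ∀ x ∈ Finset.Icc 1 m, ∀ y ∈ Finset.Icc 1 m, ζ ^ x = ζ ^ y → x = y := by
    intro x hx y hy h
    simp only [Finset.mem_Icc] at hx hy
    exact hprim.pow_inj (by omega) (by omega) h
  have hcard : s.card = m := by
    rw [hs, Finset.card_image_of_injOn hinj, Nat.card_Icc]
    omega
  have hle : s.val ≤ (M.charpoly).roots := by
    refine Multiset.le_iff_count.mpr fun a => ?_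
    by_cases ha : a ∈ s
    · have h1 : s.val.count a = 1 := Multiset.count_eq_one_of_mem s.nodup (Finset.mem_def.mp ha)
      rw [h1, Polynomial.count_roots]
      obtain ⟨k, hk, rfl⟩ := Finset.mem_image.mp ha
      simp only [Finset.mem_Icc] at hk
      exact (Polynomial.rootMultiplicity_pos hmonic.ne_zero).mpr (hroot k hk.1 hk.2)
    · rw [Multiset.count_eq_zero_of_notMem ha]
      exact Nat.zero_le _
  have hdvd : (∏ a ∈ s, (X - C a)) ∣ M.charpoly := by
    have h1 : (s.val.map fun a => X - C a).prod ∣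
        ((M.charpoly).roots.map fun a => X - C a).prod :=
      Multiset.prod_dvd_prod_of_le (Multiset.map_le_map hle)
    exact h1.trans (Polynomial.prod_multiset_X_sub_C_dvd _)
  have hmonicprod : (∏ a ∈ s, (X - C a)).Monic :=
    Polynomial.monic_prod_of_monic _ _ fun a _ => Polynomial.monic_X_sub_C a
  have hdegprod : (∏ a ∈ s, (X - C a)).natDegree = m := by
    rw [Polynomial.natDegree_prod _ _ fun a _ => Polynomial.X_sub_C_ne_zero a]
    simp [Polynomial.natDegree_X_sub_C, hcard]
  have hcp : (∏ a ∈ s, (X - C a)) = M.charpoly :=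
    Polynomial.eq_of_dvd_of_natDegree_le_of_leadingCoeff hdvd
      (by rw [hdeg, hdegprod]) (by rw [hmonicprod.leadingCoeff, hmonic.leadingCoeff])
  have hcp2 : M.charpoly = ∏ k ∈ Finset.Icc 1 m, (X - C (ζ ^ k)) := by
    rw [← hcp, hs, Finset.prod_image hinj]
  constructor
  · rw [hcp2]
    exact Finset.prod_congr rfl fun k _ => by rw [hexp k]
  · -- M ^ (m+1) = 1
    have hpinj : ∀ a ∈ Finset.range (m + 1), ∀ b ∈ Finset.range (m + 1),
        ζ ^ a = ζ ^ b → a = b := fun a ha b hb h =>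
      hprim.pow_inj (Finset.mem_range.mp ha) (Finset.mem_range.mp hb) h
    have himg : Polynomial.nthRootsFinset (m + 1) (1 : ℂ)
        = (Finset.range (m + 1)).image (fun i => ζ ^ i) := by
      symm
      apply Finset.eq_of_subset_of_card_le
      · intro x hx
        obtain ⟨i, hi, rfl⟩ := Finset.mem_image.mp hx
        refine (Polynomial.mem_nthRootsFinset (Nat.succ_pos m) 1).mpr ?_
        rw [← pow_mul, mul_comm, pow_mul, hprim.pow_eq_one, one_pow]
      · rw [hprim.card_nthRootsFinset, Finset.card_image_of_injOn hpinj,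
          Finset.card_range]
    have hXpow : (X : ℂ[X]) ^ (m + 1) - 1
        = ∏ i ∈ Finset.range (m + 1), (X - C (ζ ^ i)) := by
      rw [Polynomial.X_pow_sub_one_eq_prod (Nat.succ_pos m) hprim, himg,
        Finset.prod_image hpinj]
    have hrange : Finset.range (m + 1) = insert 0 (Finset.Icc 1 m) := by
      ext x
      simp only [Finset.mem_range, Finset.mem_insert, Finset.mem_Icc]
      omega
    rw [hrange, Finset.prod_insert (by simp)] at hXpow
    have hfact : (X : ℂ[X]) ^ (m + 1) - 1 = (X - 1) * M.charpoly := by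
      rw [hXpow, hcp2]
      simp
    have := congrArg (Polynomial.aeval M) hfact
    simp only [map_sub, map_pow, Polynomial.aeval_X, _root_.map_one, _root_.map_mul,
      Matrix.aeval_self_charpoly, mul_zero] at this
    exact sub_eq_zero.mp this
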